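/- For all x > 0, we have x² − sinh²(x)·cosh²(x) + 2x·cosh³(x)·sinh(x) > 0. -/
import Mathlib

lemma sinh_le_mul_cosh {x : ℝ} (hx : 0 ≤ x) : Real.sinh x ≤ x * Real.cosh x := by
  have h : MonotoneOn (fun t : ℝ => t * Real.cosh t - Real.sinh t) (Set.Ici 0) := by
    apply monotoneOn_of_deriv_nonneg (convex_Ici 0)
    · fun_prop
    · fun_prop
    · intro t ht
      simp only [interior_Ici, Set.mem_Ioi] at ht
      have : deriv (fun t : ℝ => t * Real.cosh t - Real.sinh t) t = t * Real.sinh t := by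
        simp [mul_comm, Real.deriv_cosh, Real.deriv_sinh]

      rw [this]
      positivity
  have := h (Set.self_mem_Ici) (Set.mem_Ici.2 hx) hx
  simpa using this

/-- For all `x > 0`, `x² − sinh² x · cosh² x + 2x·cosh³ x · sinh x > 0`. -/
theorem hyp_ineq (x : ℝ) (hx : 0 < x) :
    x ^ 2 - (Real.sinh x) ^ 2 * (Real.cosh x) ^ 2
      + 2 * x * (Real.cosh x) ^ 3 * Real.sinh x > 0 := by
  have h1 : Real.sinh x ≤ x * Real.cosh x := sinh_le_mul_cosh hx.le
  have h2 : 0 < Real.sinh x := by rwa [Real.sinh_pos_iff]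
  have h3 : 0 < Real.cosh x := Real.cosh_pos x
  nlinarith [mul_pos h2 h3, sq_nonneg x, mul_pos (mul_pos h2 h3) (mul_pos h3 h3)]
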